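/- Let df ≥ 1 be an integer, let ν_1, ..., ν_df ∈ [0,1) and λ_1, ..., λ_df ∈ ℝ, let X_1, ..., X_df be independent standard normal random variables, and define Q := (1/2) Σ_{j=1}^{df} (√ν_j X_j + √(1−ν_j) λ_j)² and c_l := E[Q^l] / l! for integers l ≥ 0 (so c_0 = 1). Then for every integer l ≥ 0, c_{l+1} = (1/(l+1)) Σ_{i=0}^{l} ( (1/2) Σ_{j=1}^{df} ν_j^{i} [ ν_j + (i+1)(1−ν_j) λ_j² ] ) c_{l−i}. -/

import Mathlib

open MeasureTheory ProbabilityTheory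

noncomputable section

/-- The quadratic form `Q(λ) = (1/2) Σ_j (√ν_j X_j + √(1-ν_j) λ_j)²` evaluated at the
outcome `ω` of the `df` independent standard normal variables. -/
def Qform (df : ℕ) (ν lam : Fin df → ℝ) (ω : Fin df → ℝ) : ℝ :=
  (1 / 2) * ∑ j, (Real.sqrt (ν j) * ω j + Real.sqrt (1 - ν j) * lam j) ^ 2

/-- The product of `df` standard Gaussian measures on `ℝ`. -/
def gaussPi (df : ℕ) : Measure (Fin df → ℝ) :=
  Measure.pi fun _ => gaussianReal 0 1

/-- `c_l(λ) = E[Q(λ)^l] / l!`. -/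
def cCoef (df : ℕ) (ν lam : Fin df → ℝ) (l : ℕ) : ℝ :=
  (∫ ω, Qform df ν lam ω ^ l ∂gaussPi df) / Nat.factorial l

namespace Stmt11

open Real




/-! ### One-dimensional Gaussian moment facts -/

/-- `g n x = x^n * exp(-x²/2)`. -/
def g (n : ℕ) (x : ℝ) : ℝ := x ^ n * Real.exp (-(1/2) * x ^ 2)

lemma g_int (n : ℕ) : Integrable (g n) := by
  have h := integrable_rpow_mul_exp_neg_mul_sq (b := (1:ℝ)/2) (by norm_num)
    (s := (n : ℝ)) (neg_one_lt_zero.trans_le (Nat.cast_nonneg n))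
  unfold g
  simp_rw [← Real.rpow_natCast _ n]
  exact h

lemma g_rec (k : ℕ) : ∫ x, g (k+1) x = k * ∫ x, g (k-1) x := by
  have hF : ∀ x : ℝ, HasDerivAt (fun x : ℝ => -g k x)
      (g (k+1) x - k * g (k-1) x) x := by
    intro x
    unfold g
    have h1 : HasDerivAt (fun x : ℝ => x ^ k) ((k:ℝ) * x^(k-1)) x := hasDerivAt_pow k x
    have h2 : HasDerivAt (fun x : ℝ => Real.exp (-(1/2) * x^2))
        (Real.exp (-(1/2) * x^2) * (-(1/2) * ((2:ℕ) * x^(2-1)))) x :=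
      ((hasDerivAt_pow 2 x).const_mul (-(1/2))).exp
    have h := (h1.mul h2).neg
    refine HasDerivAt.congr_deriv h ?_
    rw [show (2:ℕ)-1 = 1 from rfl]
    push_cast
    ring
  have hint1 : Integrable (fun x => g (k+1) x - k * g (k-1) x) :=
    (g_int (k+1)).sub ((g_int (k-1)).const_mul _)
  have hint2 : Integrable (fun x : ℝ => -g k x) := (g_int k).neg
  have h0 := integral_eq_zero_of_hasDerivAt_of_integrable hF hint1 hint2
  rw [integral_sub (g_int (k+1)) ((g_int (k-1)).const_mul _), integral_const_mul,
    sub_eq_zero] at h0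
  exact h0

/-- `M n` is the `n`-th moment of the standard Gaussian. -/
def M (n : ℕ) : ℝ := ∫ x, x ^ n ∂(gaussianReal 0 1)

lemma pdf_eq (x : ℝ) :
    gaussianPDFReal 0 1 x = (Real.sqrt (2*π))⁻¹ * Real.exp (-(1/2) * x^2) := by
  simp only [gaussianPDFReal, NNReal.coe_one, mul_one, sub_zero]
  congr 1
  ring

lemma gauss_transfer (f : ℝ → ℝ) :
    ∫ x, f x ∂(gaussianReal 0 1) = ∫ x, gaussianPDFReal 0 1 x * f x := by
  rw [gaussianReal_of_var_ne_zero 0 one_ne_zero]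
  rw [show gaussianPDF 0 1 = fun x => ((gaussianPDFReal 0 1 x).toNNReal : ENNReal) from rfl]
  rw [integral_withDensity_eq_integral_smul ((measurable_gaussianPDFReal 0 1).real_toNNReal) f]
  congr 1 with x
  simp [NNReal.smul_def, Real.coe_toNNReal _ (gaussianPDFReal_nonneg 0 1 x)]

lemma M_int (n : ℕ) : Integrable (fun x : ℝ => x ^ n) (gaussianReal 0 1) := by
  rw [gaussianReal_of_var_ne_zero 0 one_ne_zero]
  rw [gaussianPDF_def, integrable_withDensity_iff ((measurable_gaussianPDFReal 0 1).ennreal_ofReal)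
    (ae_of_all _ fun x => ENNReal.ofReal_lt_top)]
  have : (fun x : ℝ => x^n * (ENNReal.ofReal (gaussianPDFReal 0 1 x)).toReal)
      = fun x => (Real.sqrt (2*π))⁻¹ * g n x := by
    ext x
    rw [ENNReal.toReal_ofReal (gaussianPDFReal_nonneg 0 1 x), pdf_eq, g]
    ring
  rw [this]
  exact (g_int n).const_mul _

lemma M_val (n : ℕ) : M n = (Real.sqrt (2*π))⁻¹ * ∫ x, g n x := by
  rw [M, gauss_transfer, ← integral_const_mul]
  congr 1 with x
  rw [pdf_eq, g]
  ring

lemma M_rec (k : ℕ) : M (k+1) = k * M (k-1) := by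
  rw [M_val, M_val, g_rec, ← mul_assoc, mul_comm (Real.sqrt (2*π))⁻¹ (k:ℝ), mul_assoc]

lemma M_zero : M 0 = 1 := by
  simp [M]





variable {μ : Measure ℝ} [IsProbabilityMeasure μ]

lemma integrable_pi_prod : ∀ {n : ℕ} (f : Fin n → ℝ → ℝ), (∀ i, Integrable (f i) μ) →
    Integrable (fun x : Fin n → ℝ => ∏ i, f i (x i)) (Measure.pi fun _ => μ) := by
  intro n
  induction n with
  | zero =>
      intro f hf
      simp only [Finset.univ_eq_empty, Finset.prod_empty]
      have : IsProbabilityMeasure (Measure.pi fun _ : Fin 0 => μ) := by infer_instance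
      exact integrable_const 1
  | succ n n_ih =>
      intro f hf
      have hmp := ((measurePreserving_piFinSuccAbove (fun _ : Fin (n+1) => μ) 0).symm)
      rw [← hmp.integrable_comp_emb (MeasurableEquiv.measurableEmbedding _)]
      simp_rw [MeasurableEquiv.piFinSuccAbove_symm_apply, Fin.insertNthEquiv,
        Fin.prod_univ_succ, Fin.insertNth_zero]
      simp only [Fin.zero_succAbove, Function.comp_def, Fin.cons_zero, Fin.cons_succ]
      have : Integrable (fun x : Fin n → ℝ => ∏ j, f (Fin.succ j) (x j)) (Measure.pi fun _ => μ) :=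
        n_ih _ (fun i => hf _)
      exact Integrable.mul_prod (hf 0) this

lemma integral_pi_prod : ∀ {n : ℕ} (f : Fin n → ℝ → ℝ),
    ∫ x : Fin n → ℝ, ∏ i, f i (x i) ∂(Measure.pi fun _ => μ) = ∏ i, ∫ x, f i x ∂μ := by
  intro n
  induction n with
  | zero =>
      intro f
      have : IsProbabilityMeasure (Measure.pi fun _ : Fin 0 => μ) := by infer_instance
      simp
  | succ n n_ih =>
      intro f
      calc
        _ = ∫ x : ℝ × (Fin n → ℝ),
            f 0 x.1 * ∏ i : Fin n, f (Fin.succ i) (x.2 i) ∂(μ.prod (Measure.pi fun _ => μ)) := by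
          rw [← ((measurePreserving_piFinSuccAbove
            (fun _ : Fin (n+1) => μ) 0).symm).integral_comp']
          congr 1 with x
          rw [MeasurableEquiv.piFinSuccAbove_symm_apply, Fin.prod_univ_succ]
          simp [Fin.insertNthEquiv, Fin.insertNth_zero, Fin.zero_succAbove]
        _ = (∫ x, f 0 x ∂μ) * ∏ i : Fin n, ∫ x, f (Fin.succ i) x ∂μ := by
          rw [← n_ih, ← integral_prod_mul]
        _ = ∏ i, ∫ x, f i x ∂μ := by rw [Fin.prod_univ_succ]


open MvPolynomial

instance (df : ℕ) : IsProbabilityMeasure (gaussPi df) := by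
  unfold gaussPi; infer_instance

variable {df : ℕ}

/-- Integral of a polynomial against the product Gaussian measure. -/
def Im (P : MvPolynomial (Fin df) ℝ) : ℝ := ∫ ω, MvPolynomial.eval ω P ∂gaussPi df

lemma Mon_int (d : Fin df → ℕ) :
    Integrable (fun ω : Fin df → ℝ => ∏ i, ω i ^ d i) (gaussPi df) :=
  integrable_pi_prod (fun i x => x ^ d i) (fun i => M_int (d i))

lemma Mon_val (d : Fin df → ℕ) :
    ∫ ω, (∏ i, ω i ^ d i) ∂gaussPi df = ∏ i, M (d i) :=
  integral_pi_prod (fun i x => x ^ d i)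

lemma integrable_eval (P : MvPolynomial (Fin df) ℝ) :
    Integrable (fun ω => MvPolynomial.eval ω P) (gaussPi df) := by
  have : (fun ω : Fin df → ℝ => MvPolynomial.eval ω P)
      = fun ω => ∑ d ∈ P.support, P.coeff d * ∏ i, ω i ^ d i :=
    funext fun ω => eval_eq' ω P
  rw [this]
  exact integrable_finset_sum _ (fun d _ => (Mon_int fun i => d i).const_mul _)

lemma Im_add (P Q : MvPolynomial (Fin df) ℝ) : Im (P + Q) = Im P + Im Q := by
  unfold Im
  simp_rw [map_add]
  exact integral_add (integrable_eval P) (integrable_eval Q)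

lemma Im_Cmul (r : ℝ) (P : MvPolynomial (Fin df) ℝ) : Im (C r * P) = r * Im P := by
  unfold Im
  simp_rw [map_mul, eval_C]
  exact integral_const_mul r _

lemma Im_sum {A : Type*} (s : Finset A) (F : A → MvPolynomial (Fin df) ℝ) :
    Im (∑ a ∈ s, F a) = ∑ a ∈ s, Im (F a) := by
  unfold Im
  simp_rw [map_sum]
  exact integral_finset_sum s (fun a _ => integrable_eval (F a))

lemma Im_one : Im (1 : MvPolynomial (Fin df) ℝ) = 1 := by
  unfold Im; simp

lemma Im_zero : Im (0 : MvPolynomial (Fin df) ℝ) = 0 := by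
  unfold Im; simp

lemma Im_mono (d : Fin df →₀ ℕ) (c : ℝ) :
    Im (monomial d c) = c * ∏ i, M (d i) := by
  unfold Im
  simp_rw [eval_monomial]
  have h : ∀ ω : Fin df → ℝ, (d.prod fun n e => ω n ^ e) = ∏ i, ω i ^ d i := fun ω =>
    Finsupp.prod_fintype _ _ (fun i => pow_zero _)
  simp_rw [h]
  rw [integral_const_mul, Mon_val]

lemma Im_ibp (j : Fin df) (P : MvPolynomial (Fin df) ℝ) :
    Im (X j * P) = Im (pderiv j P) := by
  conv_lhs => rw [P.as_sum]
  conv_rhs => rw [P.as_sum]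
  rw [Finset.mul_sum, map_sum, Im_sum, Im_sum]
  refine Finset.sum_congr rfl fun d _ => ?_
  rw [show (X j : MvPolynomial (Fin df) ℝ) = monomial (Finsupp.single j 1) 1 from rfl,
    monomial_mul, pderiv_monomial, Im_mono, Im_mono,
    Finset.prod_eq_prod_diff_singleton_mul (Finset.mem_univ j),
    Finset.prod_eq_prod_diff_singleton_mul (Finset.mem_univ j)]
  have hoff : ∀ i ∈ Finset.univ \ {j},
      M ((Finsupp.single j 1 + d : Fin df →₀ ℕ) i) = M (d i) ∧
        M ((d - Finsupp.single j 1 : Fin df →₀ ℕ) i) = M (d i) := by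
    intro i hi
    have hij : i ≠ j := by simpa using (Finset.mem_sdiff.mp hi).2
    constructor <;> · congr 1; simp [Finsupp.single_apply, hij.symm]
  rw [Finset.prod_congr rfl (fun i hi => (hoff i hi).1),
    Finset.prod_congr rfl (fun i hi => (hoff i hi).2)]
  have hj1 : (Finsupp.single j 1 + d : Fin df →₀ ℕ) j = d j + 1 := by
    simp [add_comm]
  have hj2 : (d - Finsupp.single j 1 : Fin df →₀ ℕ) j = d j - 1 := by
    simp
  rw [hj1, hj2, M_rec (d j)]
  ring

section Main

variable {df : ℕ} (ν lam : Fin df → ℝ)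

/-- `Y j` as a polynomial. -/
def Yp (j : Fin df) : MvPolynomial (Fin df) ℝ :=
  C (Real.sqrt (ν j)) * X j + C (Real.sqrt (1 - ν j) * lam j)

/-- `Q` as a polynomial. -/
def Qp : MvPolynomial (Fin df) ℝ := C (1/2 : ℝ) * ∑ j, (Yp ν lam j) ^ 2

lemma eval_Qp (ω : Fin df → ℝ) : MvPolynomial.eval ω (Qp ν lam) = Qform df ν lam ω := by
  simp [Qp, Yp, Qform]

lemma pderiv_Yp_self (j : Fin df) : pderiv j (Yp ν lam j) = C (Real.sqrt (ν j)) := by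
  simp [Yp]

lemma pderiv_Yp_ne {j k : Fin df} (h : k ≠ j) : pderiv j (Yp ν lam k) = 0 := by
  simp [Yp, pderiv_X_of_ne h]

lemma pderiv_Qp (j : Fin df) :
    pderiv j (Qp ν lam) = C (Real.sqrt (ν j)) * Yp ν lam j := by
  unfold Qp
  rw [pderiv_C_mul, map_sum]
  rw [Finset.sum_eq_single j
    (fun k _ hk => by rw [pderiv_pow, pderiv_Yp_ne ν lam hk]; ring)
    (fun h => absurd (Finset.mem_univ j) h)]
  rw [pderiv_pow, pderiv_Yp_self]
  have h2 : ((2 : ℕ) : MvPolynomial (Fin df) ℝ) = C (2 : ℝ) := by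
    push_cast
    rw [map_ofNat]
  have h3 : (C ((1:ℝ)/2) : MvPolynomial (Fin df) ℝ) * C (2:ℝ) = 1 := by
    rw [← C_mul]; norm_num
  rw [h2, pow_one]
  linear_combination (Yp ν lam j * C (Real.sqrt (ν j))) * h3

lemma pderiv_Qp_pow (j : Fin df) (l : ℕ) :
    pderiv j (Qp ν lam ^ (l+1))
      = C (((l:ℝ)+1) * Real.sqrt (ν j)) * (Yp ν lam j * Qp ν lam ^ l) := by
  rw [pderiv_pow, pderiv_Qp, Nat.add_sub_cancel]
  have : ((l + 1 : ℕ) : MvPolynomial (Fin df) ℝ) = C (((l:ℝ)+1)) := by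
    push_cast
    simp
  rw [this, C_mul]
  ring

/-- moments of `Q`. -/
def mQ (l : ℕ) : ℝ := Im (Qp ν lam ^ l)

/-- `T j l = ∫ Y_j Q^l`. -/
def TQ (j : Fin df) (l : ℕ) : ℝ := Im (Yp ν lam j * Qp ν lam ^ l)

/-- `S j l = ∫ Y_j² Q^l`. -/
def SQ (j : Fin df) (l : ℕ) : ℝ := Im (Yp ν lam j ^ 2 * Qp ν lam ^ l)

lemma mQ_zero : mQ ν lam 0 = 1 := by
  simp [mQ, Im_one]

lemma TQ_split (j : Fin df) (l : ℕ) :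
    TQ ν lam j l = Real.sqrt (ν j) * Im (X j * Qp ν lam ^ l)
      + Real.sqrt (1 - ν j) * lam j * mQ ν lam l := by
  have : Yp ν lam j * Qp ν lam ^ l
      = C (Real.sqrt (ν j)) * (X j * Qp ν lam ^ l)
        + C (Real.sqrt (1 - ν j) * lam j) * Qp ν lam ^ l := by
    unfold Yp; ring
  rw [TQ, this, Im_add, Im_Cmul, Im_Cmul, mQ]

lemma TQ_zero (j : Fin df) :
    TQ ν lam j 0 = Real.sqrt (1 - ν j) * lam j := by
  rw [TQ_split, pow_zero, Im_ibp, pderiv_one, Im_zero, mQ_zero]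
  ring

lemma TQ_rec (j : Fin df) (hj : 0 ≤ ν j) (l : ℕ) :
    TQ ν lam j (l+1) = ((l:ℝ)+1) * ν j * TQ ν lam j l
      + Real.sqrt (1 - ν j) * lam j * mQ ν lam (l+1) := by
  rw [TQ_split, Im_ibp, pderiv_Qp_pow, Im_Cmul, ← TQ]
  linear_combination ((l:ℝ)+1) * TQ ν lam j l * Real.mul_self_sqrt hj

lemma SQ_split (j : Fin df) (l : ℕ) :
    SQ ν lam j l = Real.sqrt (ν j) * Im (pderiv j (Yp ν lam j * Qp ν lam ^ l))
      + Real.sqrt (1 - ν j) * lam j * TQ ν lam j l := by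
  have : Yp ν lam j ^ 2 * Qp ν lam ^ l
      = C (Real.sqrt (ν j)) * (X j * (Yp ν lam j * Qp ν lam ^ l))
        + C (Real.sqrt (1 - ν j) * lam j) * (Yp ν lam j * Qp ν lam ^ l) := by
    unfold Yp; ring
  rw [SQ, this, Im_add, Im_Cmul, Im_Cmul, Im_ibp, TQ]

lemma SQ_zero (j : Fin df) (hj : 0 ≤ ν j) (hj1 : ν j ≤ 1) :
    SQ ν lam j 0 = ν j + (1 - ν j) * lam j ^ 2 := by
  rw [SQ_split, TQ_zero, pow_zero, mul_one, pderiv_Yp_self]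
  have : Im (C (Real.sqrt (ν j)) : MvPolynomial (Fin df) ℝ) = Real.sqrt (ν j) := by
    rw [show (C (Real.sqrt (ν j)) : MvPolynomial (Fin df) ℝ)
        = C (Real.sqrt (ν j)) * 1 by ring, Im_Cmul, Im_one, mul_one]
  rw [this]
  have h1 := Real.mul_self_sqrt hj
  have h2 := Real.mul_self_sqrt (show (0:ℝ) ≤ 1 - ν j by linarith)
  linear_combination h1 + lam j ^ 2 * h2

lemma SQ_rec (j : Fin df) (hj : 0 ≤ ν j) (l : ℕ) :
    SQ ν lam j (l+1) = ν j * mQ ν lam (l+1) + ((l:ℝ)+1) * ν j * SQ ν lam j l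
      + Real.sqrt (1 - ν j) * lam j * TQ ν lam j (l+1) := by
  rw [SQ_split]
  have hd : pderiv j (Yp ν lam j * Qp ν lam ^ (l+1))
      = C (Real.sqrt (ν j)) * Qp ν lam ^ (l+1)
        + C (((l:ℝ)+1) * Real.sqrt (ν j)) * (Yp ν lam j ^ 2 * Qp ν lam ^ l) := by
    rw [pderiv_mul, pderiv_Yp_self, pderiv_Qp_pow]
    ring
  rw [hd, Im_add, Im_Cmul, Im_Cmul, ← mQ, ← SQ]
  linear_combination (mQ ν lam (l+1) + ((l:ℝ)+1) * SQ ν lam j l) * Real.mul_self_sqrt hj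

lemma TQ_form (j : Fin df) (hj : 0 ≤ ν j) (l : ℕ) :
    TQ ν lam j l = Real.sqrt (1 - ν j) * lam j *
      ∑ i ∈ Finset.range (l+1), (l.descFactorial i : ℝ) * ν j ^ i * mQ ν lam (l - i) := by
  induction l with
  | zero => simp [TQ_zero, mQ_zero]
  | succ l ih =>
      rw [TQ_rec ν lam j hj, ih,
        Finset.sum_range_succ'
          (fun i => (((l+1).descFactorial i : ℕ) : ℝ) * ν j ^ i * mQ ν lam (l + 1 - i)) (l+1),
        mul_add, Finset.mul_sum, Finset.mul_sum, Finset.mul_sum]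
      congr 1
      · refine Finset.sum_congr rfl fun k hk => ?_
        simp only [Nat.succ_sub_succ_eq_sub]
        push_cast [Nat.succ_descFactorial_succ]
        ring
      · simp only [Nat.descFactorial_zero, Nat.cast_one, pow_zero, Nat.sub_zero]
        ring

lemma SQ_form (j : Fin df) (hj : 0 ≤ ν j) (hj1 : ν j ≤ 1) (l : ℕ) :
    SQ ν lam j l = ∑ i ∈ Finset.range (l+1), (l.descFactorial i : ℝ) * ν j ^ i *
      (ν j + ((i:ℝ)+1) * ((1 - ν j) * lam j ^ 2)) * mQ ν lam (l - i) := by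
  induction l with
  | zero => simp [SQ_zero ν lam j hj hj1, mQ_zero]
  | succ l ih =>
      rw [SQ_rec ν lam j hj, ih, TQ_form ν lam j hj]
      set c : ℝ := (1 - ν j) * lam j ^ 2 with hc
      have hb : Real.sqrt (1 - ν j) * lam j * (Real.sqrt (1 - ν j) * lam j) = c := by
        rw [hc, show Real.sqrt (1 - ν j) * lam j * (Real.sqrt (1 - ν j) * lam j)
            = (Real.sqrt (1 - ν j) * Real.sqrt (1 - ν j)) * lam j ^ 2 by ring,
          Real.mul_self_sqrt (by linarith : (0:ℝ) ≤ 1 - ν j)]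
      rw [show Real.sqrt (1 - ν j) * lam j * (Real.sqrt (1 - ν j) * lam j *
            ∑ i ∈ Finset.range (l+1+1),
              (((l+1).descFactorial i : ℕ) : ℝ) * ν j ^ i * mQ ν lam (l+1-i))
          = c * ∑ i ∈ Finset.range (l+1+1),
              (((l+1).descFactorial i : ℕ) : ℝ) * ν j ^ i * mQ ν lam (l+1-i) by
        rw [← hb]; ring]
      rw [Finset.sum_range_succ'
          (fun i => (((l+1).descFactorial i : ℕ) : ℝ) * ν j ^ i * mQ ν lam (l+1-i)) (l+1),
        Finset.sum_range_succ'
          (fun i => (((l+1).descFactorial i : ℕ) : ℝ) * ν j ^ i *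
            (ν j + ((i:ℝ)+1) * c) * mQ ν lam (l+1-i)) (l+1)]
      have hAB : ((l:ℝ)+1) * ν j * (∑ i ∈ Finset.range (l+1),
            ((l.descFactorial i : ℕ) : ℝ) * ν j ^ i * (ν j + ((i:ℝ)+1) * c) * mQ ν lam (l-i))
          + c * (∑ i ∈ Finset.range (l+1),
            (((l+1).descFactorial (i+1) : ℕ) : ℝ) * ν j ^ (i+1) * mQ ν lam (l+1-(i+1)))
          = ∑ i ∈ Finset.range (l+1),
            (((l+1).descFactorial (i+1) : ℕ) : ℝ) * ν j ^ (i+1) *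
              (ν j + (((i:ℕ)+1:ℝ)+1) * c) * mQ ν lam (l+1-(i+1)) := by
        rw [Finset.mul_sum, Finset.mul_sum, ← Finset.sum_add_distrib]
        refine Finset.sum_congr rfl fun k hk => ?_
        simp only [Nat.succ_sub_succ_eq_sub]
        push_cast [Nat.succ_descFactorial_succ]
        ring
      simp only [Nat.descFactorial_zero, Nat.cast_one] at hAB ⊢
      push_cast at hAB ⊢
      linear_combination hAB
lemma mQ_rec (hν : ∀ j, 0 ≤ ν j ∧ ν j < 1) (l : ℕ) :
    mQ ν lam (l+1) = ∑ i ∈ Finset.range (l+1), (l.descFactorial i : ℝ) *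
      ((1/2) * ∑ j, ν j ^ i * (ν j + ((i:ℝ)+1) * (1 - ν j) * lam j ^ 2)) * mQ ν lam (l-i) := by
  have hQ : Qp ν lam ^ (l+1) = C (1/2 : ℝ) * ∑ j, (Yp ν lam j ^ 2 * Qp ν lam ^ l) := by
    conv_rhs => rw [show (∑ j, (Yp ν lam j ^ 2 * Qp ν lam ^ l))
        = (∑ j, Yp ν lam j ^ 2) * Qp ν lam ^ l from (Finset.sum_mul _ _ _).symm]
    rw [← mul_assoc, ← Qp, ← pow_succ']
  rw [mQ, hQ, Im_Cmul, Im_sum]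
  have hS : ∑ j, Im (Yp ν lam j ^ 2 * Qp ν lam ^ l)
      = ∑ j, ∑ i ∈ Finset.range (l+1), (l.descFactorial i : ℝ) * ν j ^ i *
        (ν j + ((i:ℝ)+1) * ((1 - ν j) * lam j ^ 2)) * mQ ν lam (l - i) :=
    Finset.sum_congr rfl fun j _ => SQ_form ν lam j (hν j).1 (hν j).2.le l
  rw [hS, Finset.sum_comm, Finset.mul_sum]
  refine Finset.sum_congr rfl fun i hi => ?_
  rw [Finset.mul_sum, Finset.mul_sum, Finset.mul_sum, Finset.sum_mul]
  refine Finset.sum_congr rfl fun j _ => ?_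
  ring

lemma cCoef_eq (l : ℕ) : cCoef df ν lam l = mQ ν lam l / (l.factorial : ℝ) := by
  rw [cCoef, mQ, Im]
  congr 1
  refine integral_congr_ae (ae_of_all _ fun ω => ?_)
  simp only [map_pow, eval_Qp]

end Main

end Stmt11

theorem statement11 (df : ℕ) (hdf : 1 ≤ df) (ν lam : Fin df → ℝ)
    (hν : ∀ j, 0 ≤ ν j ∧ ν j < 1) :
    ∀ l : ℕ,
      cCoef df ν lam (l + 1) =
        (1 / ((l : ℝ) + 1)) *
          ∑ i ∈ Finset.range (l + 1),
            ((1 / 2) * ∑ j, ν j ^ i * (ν j + ((i : ℝ) + 1) * (1 - ν j) * lam j ^ 2)) *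
              cCoef df ν lam (l - i) := by
  intro l
  simp only [Stmt11.cCoef_eq ν lam]
  rw [Stmt11.mQ_rec ν lam hν l, Finset.sum_div, Finset.mul_sum]
  refine Finset.sum_congr rfl fun i hi => ?_
  have hil : i ≤ l := Nat.lt_succ_iff.mp (Finset.mem_range.mp hi)
  have hfac : ((l - i).factorial : ℝ) * (l.descFactorial i : ℝ) = (l.factorial : ℝ) := by
    exact_mod_cast congrArg (Nat.cast : ℕ → ℝ) (Nat.factorial_mul_descFactorial hil)
  have h1 : (((l+1).factorial : ℕ) : ℝ) = ((l:ℝ)+1) * (l.factorial : ℝ) := by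
    rw [Nat.factorial_succ]; push_cast; ring
  have hne1 : ((l - i).factorial : ℝ) ≠ 0 := Nat.cast_ne_zero.mpr (Nat.factorial_ne_zero _)
  have hne2 : ((l:ℝ)+1) ≠ 0 := by positivity
  have hD : (l.descFactorial i : ℝ) = (l.factorial : ℝ) / ((l - i).factorial : ℝ) := by
    rw [eq_div_iff hne1]
    linear_combination hfac
  have hne3 : ((l.factorial : ℝ)) ≠ 0 := Nat.cast_ne_zero.mpr (Nat.factorial_ne_zero _)
  rw [hD, h1]
  field_simp
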